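/- Suppose π_i^{[β]} satisfies the dynamic-network reproductive-value recurrence π_i^{[β]} = Σ_j e_{ij}(x,β) Σ_γ q_{βγ} π_j^{[γ]} + (1 − Σ_j e_{ji}(x,β)) Σ_γ q_{βγ} π_i^{[γ]} for all i, β and a fixed configuration x (neutral drift: e independent of x). Then the expected change in π-weighted abundance Δ̂(x,β) := Σ_{i,j} e_{ji}(x,β) (Σ_γ q_{βγ} π_i^{[γ]}) (x_j − x_i) + Σ_i x_i (Σ_γ q_{βγ} π_i^{[γ]} − π_i^{[β]}) equals 0 for every configuration x ∈ {0,1}^N and every β. -/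
import Mathlib


open Finset

/-- Under neutral drift (replacement probabilities `e` independent of the
configuration), if `π` satisfies the dynamic-network reproductive-value
recurrence, then the expected change `Δ̂(x,β)` in the `π`-weighted abundance of
the mutant trait is zero in every state `(x, β)`: the weighted abundance is a
martingale. -/
theorem pi_weighted_abundance_martingale
    {N L : ℕ} (Q : Matrix (Fin L) (Fin L) ℝ)
    (e : Fin N → Fin N → ℝ)
    (π : Fin N → Fin L → ℝ)
    (hrec : ∀ i β, π i β =
      (∑ j, e i j * ∑ γ, Q β γ * π j γ)
        + (1 - ∑ j, e j i) * ∑ γ, Q β γ * π i γ) :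
    ∀ (x : Fin N → ℝ), (∀ i, x i = 0 ∨ x i = 1) → ∀ β,
      (∑ i, ∑ j, e j i * (∑ γ, Q β γ * π i γ) * (x j - x i))
        + ∑ i, x i * ((∑ γ, Q β γ * π i γ) - π i β) = 0 := by
  intro x _ β
  set f : Fin N → ℝ := fun i => ∑ γ, Q β γ * π i γ with hf
  have h1 : ∑ i, x i * (f i - π i β)
      = ∑ i, x i * (f i - ((∑ j, e i j * f j) + (1 - ∑ j, e j i) * f i)) := by
    refine sum_congr rfl fun i _ => ?_
    rw [← hrec i β]
  rw [h1]
  have h2 : ∑ i, ∑ j, e j i * f i * (x j - x i)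
      = (∑ i, ∑ j, e i j * f j * x i) - ∑ i, ∑ j, e j i * f i * x i := by
    simp only [mul_sub, Finset.sum_sub_distrib]
    congr 1
    exact Finset.sum_comm ..
  rw [h2]
  simp only [mul_sub, mul_add, sub_mul, one_mul, Finset.mul_sum, Finset.sum_mul,
    Finset.sum_sub_distrib, Finset.sum_add_distrib]
  have c1 : ∑ i, ∑ j, e i j * f j * x i = ∑ i, ∑ j, x i * e i j * f j :=
    sum_congr rfl fun i _ => sum_congr rfl fun j _ => by ring
  have c2 : ∑ i, ∑ j, e j i * f i * x i = ∑ i, ∑ j, x i * e j i * f i :=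
    sum_congr rfl fun i _ => sum_congr rfl fun j _ => by ring
  rw [c1, c2]
  ring
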